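/- Let K contain an element ω of multiplicative order 9, ε = ω^3, and let G = M27 = ⟨a,b | a^9 = b^3 = 1, bab^{-1} = a^4⟩ act on W1 = K^3 via a = diag(ω, ω^4, ω^7) and b the cyclic permutation matrix. If w ∈ W1 is nonzero and has a nontrivial stabilizer in G, then the stabilizer is one of ⟨b⟩, ⟨a^3 b⟩, ⟨a^6 b⟩ (each of order 3); specifically Stab(w) = ⟨b⟩ iff w ∈ K·(1,1,1)^T, Stab(w) = ⟨a^3b⟩ iff w ∈ K·(ε^2, ε, 1)^T, and Stab(w) = ⟨a^6b⟩ iff w ∈ K·(ε, ε^2, 1)^T. -/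
import Mathlib


open Matrix

/-- Stabilizers for the `M27 = ⟨a,b | a⁹ = b³ = 1, bab⁻¹ = a⁴⟩`-action on `W1 = K³` via
`a = diag(ω, ω⁴, ω⁷)` (`ω` of multiplicative order 9, `ε = ω³`) and `b` the cyclic
permutation matrix.  The group generated by `Ma, Mb` is finite, so it coincides with the
`Submonoid.closure`; if a nonzero `w` has nontrivial stabilizer then the stabilizer is one
of `⟨b⟩, ⟨a³b⟩, ⟨a⁶b⟩`, with `Stab(w) = ⟨b⟩ ↔ w ∈ K·(1,1,1)`,
`Stab(w) = ⟨a³b⟩ ↔ w ∈ K·(ε²,ε,1)`, `Stab(w) = ⟨a⁶b⟩ ↔ w ∈ K·(ε,ε²,1)`. -/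
theorem stmt17 {K : Type*} [Field K] (ω : Kˣ) (hω : orderOf ω = 9)
    (w : Fin 3 → K) (hw : w ≠ 0) :
    ∀ Ma Mb : Matrix (Fin 3) (Fin 3) K,
      Ma = Matrix.diagonal ![(ω : K), (ω : K) ^ 4, (ω : K) ^ 7] →
      Mb = !![0,1,0;0,0,1;1,0,0] →
      ((∃ M ∈ Submonoid.closure {Ma, Mb}, M.mulVec w = w ∧ M ≠ 1) →
        ({M | M ∈ Submonoid.closure {Ma, Mb} ∧ M.mulVec w = w}
            = (Submonoid.closure {Mb} : Set (Matrix (Fin 3) (Fin 3) K)) ∨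
         {M | M ∈ Submonoid.closure {Ma, Mb} ∧ M.mulVec w = w}
            = (Submonoid.closure {Ma ^ 3 * Mb} : Set (Matrix (Fin 3) (Fin 3) K)) ∨
         {M | M ∈ Submonoid.closure {Ma, Mb} ∧ M.mulVec w = w}
            = (Submonoid.closure {Ma ^ 6 * Mb} : Set (Matrix (Fin 3) (Fin 3) K)))) ∧
      ({M | M ∈ Submonoid.closure {Ma, Mb} ∧ M.mulVec w = w}
          = (Submonoid.closure {Mb} : Set (Matrix (Fin 3) (Fin 3) K)) ↔
        ∃ c : K, w = c • ![1, 1, 1]) ∧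
      ({M | M ∈ Submonoid.closure {Ma, Mb} ∧ M.mulVec w = w}
          = (Submonoid.closure {Ma ^ 3 * Mb} : Set (Matrix (Fin 3) (Fin 3) K)) ↔
        ∃ c : K, w = c • ![(ω : K) ^ 6, (ω : K) ^ 3, 1]) ∧
      ({M | M ∈ Submonoid.closure {Ma, Mb} ∧ M.mulVec w = w}
          = (Submonoid.closure {Ma ^ 6 * Mb} : Set (Matrix (Fin 3) (Fin 3) K)) ↔
        ∃ c : K, w = c • ![(ω : K) ^ 3, (ω : K) ^ 6, 1]) := by
  intro Ma Mb hMa hMb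
  have hα9 : (ω:K)^9 = 1 := by
    rw [← Units.val_pow_eq_pow_val, ← hω, pow_orderOf_eq_one, Units.val_one]
  have hdvd : ∀ i : ℕ, (ω:K)^i = 1 ↔ 9 ∣ i := by
    intro i
    rw [← Units.val_pow_eq_pow_val, Units.val_eq_one, ← hω, orderOf_dvd_iff_pow_eq_one]
  have hmod : ∀ i : ℕ, (ω:K)^i = (ω:K)^(i % 9) := by
    intro i
    conv_lhs => rw [← Nat.div_add_mod i 9]
    rw [pow_add, pow_mul, hα9, one_pow, one_mul]
  have hinj : ∀ a b : ℕ, a < 9 → b < 9 → (ω:K)^a = (ω:K)^b → a = b := by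
    intro a b ha hb h
    have h' : ω ^ a = ω ^ b := Units.ext (by push_cast; exact h)
    exact pow_injOn_Iio_orderOf (by rw [hω]; exact ha) (by rw [hω]; exact hb) h'
  have hsolve : ∀ a b : ℕ, (ω:K)^a = (ω:K)^b → a % 9 = b % 9 := by
    intro a b h
    exact hinj _ _ (Nat.mod_lt _ (by norm_num)) (Nat.mod_lt _ (by norm_num))
      (by rw [← hmod, ← hmod]; exact h)
  have hMv0 : ∀ (r : ℕ) (v : Fin 3 → K), (Ma^r).mulVec v
      = ![(ω:K)^r * v 0, (ω:K)^(4*r) * v 1, (ω:K)^(7*r) * v 2] := by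
    intro r v
    rw [hMa, Matrix.diagonal_pow]
    funext k; fin_cases k <;>
      simp [Matrix.mulVec_diagonal, pow_mul, Matrix.vecHead, Matrix.vecTail]
  have hMbv : ∀ v : Fin 3 → K, Mb.mulVec v = ![v 1, v 2, v 0] := by
    intro v
    rw [hMb]; funext k; fin_cases k <;>
      simp [Matrix.mulVec, dotProduct, Fin.sum_univ_three, Matrix.vecHead, Matrix.vecTail]
  have hMv1 : ∀ r : ℕ, (Ma^r * Mb).mulVec w
      = ![(ω:K)^r * w 1, (ω:K)^(4*r) * w 2, (ω:K)^(7*r) * w 0] := by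
    intro r
    rw [← Matrix.mulVec_mulVec, hMbv, hMv0]
    funext k; fin_cases k <;> simp [Matrix.vecHead, Matrix.vecTail]
  have hMv2 : ∀ r : ℕ, (Ma^r * (Mb*Mb)).mulVec w
      = ![(ω:K)^r * w 2, (ω:K)^(4*r) * w 0, (ω:K)^(7*r) * w 1] := by
    intro r
    rw [← Matrix.mulVec_mulVec, ← Matrix.mulVec_mulVec, hMbv, hMbv, hMv0]
    funext k; fin_cases k <;> simp [Matrix.vecHead, Matrix.vecTail]
  have hvec3 : ∀ a b c : K, (![a,b,c] = w) ↔ (a = w 0 ∧ b = w 1 ∧ c = w 2) := by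
    intro a b c
    constructor
    · intro h; exact ⟨congrFun h 0, congrFun h 1, congrFun h 2⟩
    · rintro ⟨h0,h1,h2⟩; funext k; fin_cases k <;> assumption
  have hMa9 : Ma ^ 9 = 1 := by
    rw [hMa, Matrix.diagonal_pow,
      show (![(ω:K), (ω:K)^4, (ω:K)^7])^9 = 1 from funext fun k => by
        fin_cases k <;> simp [Matrix.vecHead, Matrix.vecTail] <;> (try rw [← pow_mul]) <;>
          rw [hmod] <;> norm_num [hα9]]
    exact Matrix.diagonal_one
  have hMb3 : Mb ^ 3 = 1 := by
    rw [hMb, pow_succ, pow_succ, pow_one]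
    ext i j; fin_cases i <;> fin_cases j <;>
      simp [Matrix.mul_apply, Fin.sum_univ_three, Matrix.vecHead, Matrix.vecTail]
  have hcomm : Mb * Ma = Ma ^ 4 * Mb := by
    rw [hMa, hMb, Matrix.diagonal_pow]
    ext i j; fin_cases i <;> fin_cases j <;>
      simp [Matrix.mul_apply, Fin.sum_univ_three, Matrix.diagonal, Matrix.vecHead,
        Matrix.vecTail, ← pow_mul] <;> (conv_rhs => rw [hmod]) <;> norm_num
  have hswap1 : ∀ k : ℕ, Mb * Ma ^ k = Ma ^ (4*k) * Mb := by
    intro k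
    induction k with
    | zero => simp
    | succ k ih =>
      rw [pow_succ, ← mul_assoc, ih, mul_assoc, hcomm, ← mul_assoc, ← pow_add]
      ring_nf
  have hswap : ∀ j k : ℕ, Mb ^ j * Ma ^ k = Ma ^ (4 ^ j * k) * Mb ^ j := by
    intro j
    induction j with
    | zero => simp
    | succ j ih =>
      intro k
      rw [pow_succ, mul_assoc, hswap1, ← mul_assoc, ih, mul_assoc, ← pow_succ,
        show 4^j*(4*k) = 4^(j+1)*k from by ring]
  have hmem : ∀ M : Matrix (Fin 3) (Fin 3) K,
      M ∈ Submonoid.closure {Ma, Mb} ↔ ∃ i j : ℕ, M = Ma ^ i * Mb ^ j := by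
    intro M
    constructor
    · intro hM
      induction hM using Submonoid.closure_induction with
      | mem x hx =>
        rcases hx with rfl | hx
        · exact ⟨1, 0, by simp⟩
        · obtain rfl : x = Mb := hx
          exact ⟨0, 1, by simp⟩
      | one => exact ⟨0, 0, by simp⟩
      | mul x y hx hy ihx ihy =>
        obtain ⟨i, j, rfl⟩ := ihx
        obtain ⟨k, l, rfl⟩ := ihy
        refine ⟨i + 4^j*k, j + l, ?_⟩
        rw [pow_add, pow_add, mul_assoc (Ma^i) (Mb^j), ← mul_assoc (Mb^j) (Ma^k), hswap,
          mul_assoc (Ma^(4^j*k)), ← mul_assoc (Ma^i)]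
    · rintro ⟨i, j, rfl⟩
      exact mul_mem (pow_mem (Submonoid.subset_closure (by simp)) i)
        (pow_mem (Submonoid.subset_closure (by simp)) j)
  have hred : ∀ i j : ℕ, Ma ^ i * Mb ^ j = Ma ^ (i % 9) * Mb ^ (j % 3) := by
    intro i j
    conv_lhs => rw [← Nat.div_add_mod i 9, ← Nat.div_add_mod j 3]
    rw [pow_add, pow_add, pow_mul, pow_mul, hMa9, hMb3, one_pow, one_pow, one_mul, one_mul]
  have hsq2 : (Ma^3 * Mb)^2 = Ma^6 * (Mb*Mb) := by
    rw [sq, mul_assoc, ← mul_assoc Mb, hswap1, ← mul_assoc, ← mul_assoc, ← pow_add]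
    norm_num
    rw [show (15:ℕ) = 9 + 6 by norm_num, pow_add, hMa9, one_mul, mul_assoc]
  have hsq3 : (Ma^6 * Mb)^2 = Ma^3 * (Mb*Mb) := by
    rw [sq, mul_assoc, ← mul_assoc Mb, hswap1, ← mul_assoc, ← mul_assoc, ← pow_add]
    norm_num
    rw [show (30:ℕ) = 27 + 3 by norm_num, pow_add, show (27:ℕ) = 9*3 by norm_num, pow_mul,
      hMa9, one_pow, one_mul, mul_assoc]
  have hmaster : ∀ r s : ℕ, r < 9 → s < 3 → (Ma^r * Mb^s).mulVec w = w →
      (r = 0 ∧ s = 0) ∨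
      (s = 1 ∧ ((r = 0 ∧ ∃ c:K, w = c • ![1,1,1]) ∨
        (r = 3 ∧ ∃ c:K, w = c • ![(ω:K)^6,(ω:K)^3,1]) ∨
        (r = 6 ∧ ∃ c:K, w = c • ![(ω:K)^3,(ω:K)^6,1]))) ∨
      (s = 2 ∧ ((r = 0 ∧ ∃ c:K, w = c • ![1,1,1]) ∨
        (r = 6 ∧ ∃ c:K, w = c • ![(ω:K)^6,(ω:K)^3,1]) ∨
        (r = 3 ∧ ∃ c:K, w = c • ![(ω:K)^3,(ω:K)^6,1]))) := by
    intro r s hr hs h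
    interval_cases s
    · -- s = 0
      left
      rw [pow_zero, mul_one, hMv0] at h
      obtain ⟨h0, h1, h2⟩ := (hvec3 _ _ _).mp h
      have hk : w 0 ≠ 0 ∨ w 1 ≠ 0 ∨ w 2 ≠ 0 := by
        by_contra hcon
        push_neg at hcon
        exact hw (funext fun k => by fin_cases k <;> simp [hcon.1, hcon.2.1, hcon.2.2])
      refine ⟨?_, rfl⟩
      rcases hk with hk | hk | hk
      · have h9 := (hdvd r).mp (mul_right_cancel₀ hk (by rw [h0, one_mul]))
        omega
      · have h9 := (hdvd (4*r)).mp (mul_right_cancel₀ hk (by rw [h1, one_mul]))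
        omega
      · have h9 := (hdvd (7*r)).mp (mul_right_cancel₀ hk (by rw [h2, one_mul]))
        omega
    · -- s = 1
      right; left
      rw [pow_one, hMv1] at h
      obtain ⟨h0, h1, h2⟩ := (hvec3 _ _ _).mp h
      have hw0 : w 0 ≠ 0 := by
        intro h'
        apply hw
        have e2 : w 2 = 0 := by rw [← h2, h', mul_zero]
        have e1 : w 1 = 0 := by rw [← h1, e2, mul_zero]
        funext k; fin_cases k <;> simp [h', e1, e2]
      have key : (ω:K)^(r + (4*r + 7*r)) * w 0 = 1 * w 0 := by
        rw [one_mul, pow_add, pow_add, mul_assoc, mul_assoc, h2, h1, h0]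
      have h9 := (hdvd _).mp (mul_right_cancel₀ hw0 key)
      have hr036 : r = 0 ∨ r = 3 ∨ r = 6 := by omega
      refine ⟨rfl, ?_⟩
      rcases hr036 with rfl | rfl | rfl
      · left
        refine ⟨rfl, w 2, ?_⟩
        norm_num at h0 h1
        funext k; fin_cases k <;> simp [← h0, ← h1]
      · right; left
        refine ⟨rfl, w 2, ?_⟩
        have e1 : w 1 = (ω:K)^3 * w 2 := by rw [← h1, hmod]
        have e0 : w 0 = (ω:K)^6 * w 2 := by rw [← h0, e1, ← mul_assoc, ← pow_add]
        funext k; fin_cases k <;> simp [e0, e1] <;> ring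
      · right; right
        refine ⟨rfl, w 2, ?_⟩
        have e1 : w 1 = (ω:K)^6 * w 2 := by rw [← h1, hmod]
        have e0 : w 0 = (ω:K)^3 * w 2 := by
          rw [← h0, e1, ← mul_assoc, ← pow_add, hmod]
        funext k; fin_cases k <;> simp [e0, e1] <;> ring
    · -- s = 2
      right; right
      rw [pow_two, hMv2] at h
      obtain ⟨h0, h1, h2⟩ := (hvec3 _ _ _).mp h
      have hw0 : w 0 ≠ 0 := by
        intro h'
        apply hw
        have e1 : w 1 = 0 := by rw [← h1, h', mul_zero]
        have e2 : w 2 = 0 := by rw [← h2, e1, mul_zero]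
        funext k; fin_cases k <;> simp [h', e1, e2]
      have key : (ω:K)^(r + (7*r + 4*r)) * w 0 = 1 * w 0 := by
        rw [one_mul, pow_add, pow_add, mul_assoc, mul_assoc, h1, h2, h0]
      have h9 := (hdvd _).mp (mul_right_cancel₀ hw0 key)
      have hr036 : r = 0 ∨ r = 3 ∨ r = 6 := by omega
      refine ⟨rfl, ?_⟩
      rcases hr036 with rfl | rfl | rfl
      · left
        refine ⟨rfl, w 2, ?_⟩
        norm_num at h0 h1
        funext k; fin_cases k <;> simp [← h0, ← h1]
      · right; right
        refine ⟨rfl, w 2, ?_⟩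
        have e0 : w 0 = (ω:K)^3 * w 2 := h0.symm
        have e1 : w 1 = (ω:K)^6 * w 2 := by
          rw [← h1, ← h0, ← mul_assoc, ← pow_add, hmod]
        funext k; fin_cases k <;> simp [e0, e1] <;> ring
      · right; left
        refine ⟨rfl, w 2, ?_⟩
        have e0 : w 0 = (ω:K)^6 * w 2 := h0.symm
        have e1 : w 1 = (ω:K)^3 * w 2 := by
          rw [← h1, ← h0, ← mul_assoc, ← pow_add, hmod]
        funext k; fin_cases k <;> simp [e0, e1] <;> ring
  have hcne : ∀ (v : Fin 3 → K) (c : K), w = c • v → c ≠ 0 := by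
    intro v c h hc
    exact hw (by rw [h, hc, zero_smul])
  -- pairwise incompatibility
  have hP12 : (∃ c:K, w = c • ![(1:K),1,1]) → (∃ c:K, w = c • ![(ω:K)^6,(ω:K)^3,1]) → False := by
    rintro ⟨c, hc⟩ ⟨d, hd⟩
    have hc0 : c ≠ 0 := hcne _ _ hc
    have g1 := congrFun hc 2
    have g2 := congrFun hd 2
    simp at g1 g2
    have g3 := congrFun hc 0
    have g4 := congrFun hd 0
    simp at g3 g4
    rw [g1] at g2; subst g2
    rw [g3] at g4
    have : (ω:K)^0 = (ω:K)^6 := by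
      rw [pow_zero]
      exact mul_left_cancel₀ hc0 (by rw [mul_one]; exact g4)
    have := hsolve 0 6 this
    norm_num at this
  have hP13 : (∃ c:K, w = c • ![(1:K),1,1]) → (∃ c:K, w = c • ![(ω:K)^3,(ω:K)^6,1]) → False := by
    rintro ⟨c, hc⟩ ⟨d, hd⟩
    have hc0 : c ≠ 0 := hcne _ _ hc
    have g1 := congrFun hc 2
    have g2 := congrFun hd 2
    simp at g1 g2
    have g3 := congrFun hc 0
    have g4 := congrFun hd 0
    simp at g3 g4
    rw [g1] at g2; subst g2
    rw [g3] at g4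
    have : (ω:K)^0 = (ω:K)^3 := by
      rw [pow_zero]
      exact mul_left_cancel₀ hc0 (by rw [mul_one]; exact g4)
    have := hsolve 0 3 this
    norm_num at this
  have hP23 : (∃ c:K, w = c • ![(ω:K)^6,(ω:K)^3,1]) → (∃ c:K, w = c • ![(ω:K)^3,(ω:K)^6,1]) → False := by
    rintro ⟨c, hc⟩ ⟨d, hd⟩
    have hc0 : c ≠ 0 := hcne _ _ hc
    have g1 := congrFun hc 2
    have g2 := congrFun hd 2
    simp at g1 g2
    have g3 := congrFun hc 0
    have g4 := congrFun hd 0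
    simp at g3 g4
    rw [g1] at g2; subst g2
    rw [g3] at g4
    have : (ω:K)^6 = (ω:K)^3 := mul_left_cancel₀ hc0 g4
    have := hsolve 6 3 this
    norm_num at this
  -- powers of a fixing element fix w
  have hfix : ∀ (N : Matrix (Fin 3) (Fin 3) K), N.mulVec w = w → ∀ n : ℕ, (N^n).mulVec w = w := by
    intro N hN n
    induction n with
    | zero => simp
    | succ n ih => rw [pow_succ, ← Matrix.mulVec_mulVec, hN, ih]
  -- the fixed vectors are indeed fixed
  have hfix1 : (∃ c:K, w = c • ![(1:K),1,1]) → Mb.mulVec w = w := by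
    rintro ⟨c, rfl⟩
    rw [hMbv]; funext k; fin_cases k <;> simp
  have hfix2 : (∃ c:K, w = c • ![(ω:K)^6,(ω:K)^3,1]) → (Ma^3 * Mb).mulVec w = w := by
    rintro ⟨c, hc⟩
    have c0 := congrFun hc 0
    have c1 := congrFun hc 1
    have c2 := congrFun hc 2
    simp at c0 c1 c2
    rw [hMv1]
    refine (hvec3 _ _ _).mpr ⟨?_, ?_, ?_⟩
    · rw [c1, c0]; ring
    · rw [c2, c1, hmod]; norm_num [mul_comm]
    · rw [c0, c2, mul_comm c, ← mul_assoc, ← pow_add, hmod]; norm_num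
  have hfix3 : (∃ c:K, w = c • ![(ω:K)^3,(ω:K)^6,1]) → (Ma^6 * Mb).mulVec w = w := by
    rintro ⟨c, hc⟩
    have c0 := congrFun hc 0
    have c1 := congrFun hc 1
    have c2 := congrFun hc 2
    simp at c0 c1 c2
    rw [hMv1]
    refine (hvec3 _ _ _).mpr ⟨?_, ?_, ?_⟩
    · rw [c1, c0, mul_comm c, ← mul_assoc, ← pow_add, hmod]; norm_num [mul_comm]
    · rw [c2, c1, hmod]; norm_num [mul_comm]
    · rw [c0, c2, mul_comm c, ← mul_assoc, ← pow_add, hmod]; norm_num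
  have hS1 : (∃ c:K, w = c • ![(1:K),1,1]) →
      {M | M ∈ Submonoid.closure {Ma, Mb} ∧ M.mulVec w = w}
        = (Submonoid.closure {Mb} : Set (Matrix (Fin 3) (Fin 3) K)) := by
    intro hP
    ext M
    simp only [Set.mem_setOf_eq, SetLike.mem_coe]
    constructor
    · rintro ⟨hMcl, hMw⟩
      obtain ⟨i, j, rfl⟩ := (hmem M).mp hMcl
      rw [hred] at hMw
      rw [hred]
      rcases hmaster (i%9) (j%3) (Nat.mod_lt _ (by norm_num)) (Nat.mod_lt _ (by norm_num)) hMw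
        with ⟨h1, h2⟩ | ⟨h2, ⟨h1, hQ⟩ | ⟨h1, hQ⟩ | ⟨h1, hQ⟩⟩ |
          ⟨h2, ⟨h1, hQ⟩ | ⟨h1, hQ⟩ | ⟨h1, hQ⟩⟩ <;> rw [h1, h2]
      · simpa using one_mem _
      · simpa using Submonoid.mem_closure_singleton_self
      · exact (hP12 hP hQ).elim
      · exact (hP13 hP hQ).elim
      · simpa using pow_mem Submonoid.mem_closure_singleton_self 2
      · exact (hP12 hP hQ).elim
      · exact (hP13 hP hQ).elim
    · intro hM
      obtain ⟨n, rfl⟩ := Submonoid.mem_closure_singleton.mp hM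
      exact ⟨pow_mem (Submonoid.subset_closure (by simp)) n, hfix Mb (hfix1 hP) n⟩
  have hS2 : (∃ c:K, w = c • ![(ω:K)^6,(ω:K)^3,1]) →
      {M | M ∈ Submonoid.closure {Ma, Mb} ∧ M.mulVec w = w}
        = (Submonoid.closure {Ma^3*Mb} : Set (Matrix (Fin 3) (Fin 3) K)) := by
    intro hP
    ext M
    simp only [Set.mem_setOf_eq, SetLike.mem_coe]
    constructor
    · rintro ⟨hMcl, hMw⟩
      obtain ⟨i, j, rfl⟩ := (hmem M).mp hMcl
      rw [hred] at hMw
      rw [hred]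
      rcases hmaster (i%9) (j%3) (Nat.mod_lt _ (by norm_num)) (Nat.mod_lt _ (by norm_num)) hMw
        with ⟨h1, h2⟩ | ⟨h2, ⟨h1, hQ⟩ | ⟨h1, hQ⟩ | ⟨h1, hQ⟩⟩ |
          ⟨h2, ⟨h1, hQ⟩ | ⟨h1, hQ⟩ | ⟨h1, hQ⟩⟩ <;> rw [h1, h2]
      · simpa using one_mem _
      · exact (hP12 hQ hP).elim
      · simpa using Submonoid.mem_closure_singleton_self
      · exact (hP23 hP hQ).elim
      · exact (hP12 hQ hP).elim
      · have h := pow_mem (Submonoid.mem_closure_singleton_self (y := Ma^3*Mb)) 2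
        rw [hsq2] at h
        rw [pow_two]
        exact h
      · exact (hP23 hP hQ).elim
    · intro hM
      obtain ⟨n, rfl⟩ := Submonoid.mem_closure_singleton.mp hM
      refine ⟨pow_mem (mul_mem (pow_mem (Submonoid.subset_closure (by simp)) 3)
        (Submonoid.subset_closure (by simp))) n, hfix _ (hfix2 hP) n⟩
  have hS3 : (∃ c:K, w = c • ![(ω:K)^3,(ω:K)^6,1]) →
      {M | M ∈ Submonoid.closure {Ma, Mb} ∧ M.mulVec w = w}
        = (Submonoid.closure {Ma^6*Mb} : Set (Matrix (Fin 3) (Fin 3) K)) := by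
    intro hP
    ext M
    simp only [Set.mem_setOf_eq, SetLike.mem_coe]
    constructor
    · rintro ⟨hMcl, hMw⟩
      obtain ⟨i, j, rfl⟩ := (hmem M).mp hMcl
      rw [hred] at hMw
      rw [hred]
      rcases hmaster (i%9) (j%3) (Nat.mod_lt _ (by norm_num)) (Nat.mod_lt _ (by norm_num)) hMw
        with ⟨h1, h2⟩ | ⟨h2, ⟨h1, hQ⟩ | ⟨h1, hQ⟩ | ⟨h1, hQ⟩⟩ |
          ⟨h2, ⟨h1, hQ⟩ | ⟨h1, hQ⟩ | ⟨h1, hQ⟩⟩ <;> rw [h1, h2]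
      · simpa using one_mem _
      · exact (hP13 hQ hP).elim
      · exact (hP23 hQ hP).elim
      · simpa using Submonoid.mem_closure_singleton_self
      · exact (hP13 hQ hP).elim
      · exact (hP23 hQ hP).elim
      · have h := pow_mem (Submonoid.mem_closure_singleton_self (y := Ma^6*Mb)) 2
        rw [hsq3] at h
        rw [pow_two]
        exact h
    · intro hM
      obtain ⟨n, rfl⟩ := Submonoid.mem_closure_singleton.mp hM
      refine ⟨pow_mem (mul_mem (pow_mem (Submonoid.subset_closure (by simp)) 6)
        (Submonoid.subset_closure (by simp))) n, hfix _ (hfix3 hP) n⟩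
  have hC1 : {M | M ∈ Submonoid.closure {Ma, Mb} ∧ M.mulVec w = w}
        = (Submonoid.closure {Mb} : Set (Matrix (Fin 3) (Fin 3) K)) →
      (∃ c:K, w = c • ![(1:K),1,1]) := by
    intro heq
    have hN : Mb ∈ {M | M ∈ Submonoid.closure {Ma, Mb} ∧ M.mulVec w = w} := by
      rw [heq]
      exact Submonoid.mem_closure_singleton_self
    have hMw : (Ma^0 * Mb^1).mulVec w = w := by simpa using hN.2
    rcases hmaster 0 1 (by norm_num) (by norm_num) hMw
      with ⟨-, h⟩ | ⟨-, ⟨-, hQ⟩ | ⟨h, -⟩ | ⟨h, -⟩⟩ | ⟨h, -⟩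
    · exact absurd h (by norm_num)
    · exact hQ
    · exact absurd h (by norm_num)
    · exact absurd h (by norm_num)
    · exact absurd h (by norm_num)
  have hC2 : {M | M ∈ Submonoid.closure {Ma, Mb} ∧ M.mulVec w = w}
        = (Submonoid.closure {Ma^3*Mb} : Set (Matrix (Fin 3) (Fin 3) K)) →
      (∃ c:K, w = c • ![(ω:K)^6,(ω:K)^3,1]) := by
    intro heq
    have hN : Ma^3*Mb ∈ {M | M ∈ Submonoid.closure {Ma, Mb} ∧ M.mulVec w = w} := by
      rw [heq]
      exact Submonoid.mem_closure_singleton_self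
    have hMw : (Ma^3 * Mb^1).mulVec w = w := by simpa using hN.2
    rcases hmaster 3 1 (by norm_num) (by norm_num) hMw
      with ⟨h, -⟩ | ⟨-, ⟨h, -⟩ | ⟨-, hQ⟩ | ⟨h, -⟩⟩ | ⟨h, -⟩
    · exact absurd h (by norm_num)
    · exact absurd h (by norm_num)
    · exact hQ
    · exact absurd h (by norm_num)
    · exact absurd h (by norm_num)
  have hC3 : {M | M ∈ Submonoid.closure {Ma, Mb} ∧ M.mulVec w = w}
        = (Submonoid.closure {Ma^6*Mb} : Set (Matrix (Fin 3) (Fin 3) K)) →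
      (∃ c:K, w = c • ![(ω:K)^3,(ω:K)^6,1]) := by
    intro heq
    have hN : Ma^6*Mb ∈ {M | M ∈ Submonoid.closure {Ma, Mb} ∧ M.mulVec w = w} := by
      rw [heq]
      exact Submonoid.mem_closure_singleton_self
    have hMw : (Ma^6 * Mb^1).mulVec w = w := by simpa using hN.2
    rcases hmaster 6 1 (by norm_num) (by norm_num) hMw
      with ⟨h, -⟩ | ⟨-, ⟨h, -⟩ | ⟨h, -⟩ | ⟨-, hQ⟩⟩ | ⟨h, -⟩
    · exact absurd h (by norm_num)
    · exact absurd h (by norm_num)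
    · exact absurd h (by norm_num)
    · exact hQ
    · exact absurd h (by norm_num)
  refine ⟨?_, ⟨hC1, hS1⟩, ⟨hC2, hS2⟩, ⟨hC3, hS3⟩⟩
  rintro ⟨M, hMcl, hMw, hM1⟩
  obtain ⟨i, j, rfl⟩ := (hmem M).mp hMcl
  rw [hred] at hMw
  rcases hmaster (i%9) (j%3) (Nat.mod_lt _ (by norm_num)) (Nat.mod_lt _ (by norm_num)) hMw
    with ⟨h1, h2⟩ | ⟨h2, ⟨h1, hQ⟩ | ⟨h1, hQ⟩ | ⟨h1, hQ⟩⟩ |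
      ⟨h2, ⟨h1, hQ⟩ | ⟨h1, hQ⟩ | ⟨h1, hQ⟩⟩
  · exact absurd (by rw [hred, h1, h2]; simp) hM1
  · exact Or.inl (hS1 hQ)
  · exact Or.inr (Or.inl (hS2 hQ))
  · exact Or.inr (Or.inr (hS3 hQ))
  · exact Or.inl (hS1 hQ)
  · exact Or.inr (Or.inl (hS2 hQ))
  · exact Or.inr (Or.inr (hS3 hQ))
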